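/- arXiv:2605.16950 — 4 statements merged into one kernel-verified Lean document; each statement's English description precedes it below -/
import Mathlib

section
/- Let A = ℂ[t₀^{±1},...,t_m^{±1}], let S be the ideal generated by {t_i - 1 : 0 ≤ i ≤ m}, and let S⁺ be the ideal of the polynomial subring generated by {t_i - 1} viewed inside A (i.e., the linear span of products (t₀-1)^{r₀}⋯(t_m-1)^{r_m} with Σr_i > 0). Then for all positive integers k < k', S^k = (S⁺)^k + S^{k'}, where S^k denotes the ℂ-span of products (t₀-1)^{r₀}⋯(t_m-1)^{r_m}(t₀^{-1}-1)^{s₀}⋯(t_m^{-1}-1)^{s_m} with Σ(r_i + s_i) ≥ k. -/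
/-- The Laurent polynomial ring `ℂ[t₀^{±1},…,t_m^{±1}]`. -/
abbrev LaurentRing (m : ℕ) : Type := AddMonoidAlgebra ℂ (Fin (m + 1) →₀ ℤ)

/-- The monomial `t^r`. -/
noncomputable def tpow (m : ℕ) (r : Fin (m + 1) →₀ ℤ) : LaurentRing m :=
  AddMonoidAlgebra.single r 1

/-- `S^k`: the ℂ-span of products
`(t₀-1)^{r₀}⋯(t_m-1)^{r_m}(t₀⁻¹-1)^{s₀}⋯(t_m⁻¹-1)^{s_m}` with `Σ(rᵢ+sᵢ) ≥ k`. -/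
noncomputable def Sk (m k : ℕ) : Submodule ℂ (LaurentRing m) :=
  Submodule.span ℂ { x | ∃ r s : Fin (m + 1) → ℕ,
    k ≤ (∑ i, (r i + s i)) ∧
    x = (∏ i, (tpow m (Finsupp.single i 1) - 1) ^ (r i)) *
        (∏ i, (tpow m (Finsupp.single i (-1)) - 1) ^ (s i)) }

/-- `(S⁺)^k`: the ℂ-span of products `(t₀-1)^{r₀}⋯(t_m-1)^{r_m}` with `Σrᵢ ≥ k`. -/
noncomputable def Spk (m k : ℕ) : Submodule ℂ (LaurentRing m) :=
  Submodule.span ℂ { x | ∃ r : Fin (m + 1) → ℕ,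
    k ≤ (∑ i, r i) ∧
    x = ∏ i, (tpow m (Finsupp.single i 1) - 1) ^ (r i) }

lemma tpow_key (m : ℕ) (j : Fin (m + 1)) :
    (tpow m (Finsupp.single j (-1)) - 1) + (tpow m (Finsupp.single j 1) - 1)
      + (tpow m (Finsupp.single j 1) - 1) * (tpow m (Finsupp.single j (-1)) - 1) = 0 := by
  have hTU : tpow m (Finsupp.single j 1) * tpow m (Finsupp.single j (-1)) = 1 := by
    unfold tpow
    rw [AddMonoidAlgebra.single_mul_single]
    simp [← Finsupp.single_add, AddMonoidAlgebra.one_def]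
  linear_combination hTU

lemma trade {R : Type*} [CommRing R] (G H u v : R) (hkey : H + G + G * H = 0) :
    u * (H * v) = -((G * u) * v) - (G * u) * (H * v) := by
  linear_combination (u * v) * hkey

lemma gen_mem (m k k' : ℕ) : ∀ c n (r s : Fin (m + 1) → ℕ),
    (∑ i, s i) ≤ n → k ≤ ∑ i, (r i + s i) → k' ≤ (∑ i, (r i + s i)) + c →
    (∏ i, (tpow m (Finsupp.single i 1) - 1) ^ (r i)) *
      (∏ i, (tpow m (Finsupp.single i (-1)) - 1) ^ (s i)) ∈ Spk m k ⊔ Sk m k' := by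
  intro c
  induction c with
  | zero =>
    intro n r s _ _ hk2
    exact Submodule.mem_sup_right (Submodule.subset_span ⟨r, s, by omega, rfl⟩)
  | succ c ihc =>
    intro n
    induction n with
    | zero =>
      intro r s hs hk1 _
      have hs0 : ∀ i, s i = 0 := by
        intro i
        have := Finset.single_le_sum (f := s) (fun i _ => Nat.zero_le _)
          (Finset.mem_univ i)
        omega
      refine Submodule.mem_sup_left (Submodule.subset_span ⟨r, ?_, ?_⟩)
      · have : ∑ i, (r i + s i) = ∑ i, r i :=
          Finset.sum_congr rfl fun i _ => by simp [hs0]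
        omega
      · simp [hs0]
    | succ n ihn =>
      intro r s hs hk1 hk2
      by_cases hbig : k' ≤ ∑ i, (r i + s i)
      · exact Submodule.mem_sup_right (Submodule.subset_span ⟨r, s, hbig, rfl⟩)
      by_cases hsn : (∑ i, s i) ≤ n
      · exact ihn r s hsn hk1 hk2
      have hsum : ∑ i, s i ≠ 0 := by omega
      obtain ⟨j, -, hj⟩ := Finset.exists_ne_zero_of_sum_ne_zero hsum
      obtain ⟨b, hb⟩ : ∃ b, s j = b + 1 := ⟨s j - 1, by omega⟩
      set g : Fin (m + 1) → LaurentRing m := fun i => tpow m (Finsupp.single i 1) - 1 with hg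
      set h : Fin (m + 1) → LaurentRing m := fun i => tpow m (Finsupp.single i (-1)) - 1 with hh
      set s' : Fin (m + 1) → ℕ := Function.update s j b with hs'
      set r' : Fin (m + 1) → ℕ := Function.update r j (r j + 1) with hr'
      have sumr' : ∑ i, r' i = (∑ i, r i) + 1 := by
        rw [hr', Finset.sum_update_of_mem (Finset.mem_univ j),
          ← Finset.add_sum_erase _ r (Finset.mem_univ j), Finset.erase_eq]
        ring
      have sums' : (∑ i, s' i) + 1 = ∑ i, s i := by
        rw [hs', Finset.sum_update_of_mem (Finset.mem_univ j),
          ← Finset.add_sum_erase _ s (Finset.mem_univ j), Finset.erase_eq]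
        omega
      have sumsplit : ∀ u v : Fin (m+1) → ℕ,
          ∑ i, (u i + v i) = (∑ i, u i) + ∑ i, v i := by
        intro u v; rw [Finset.sum_add_distrib]
      have P : ∀ (u : Fin (m+1) → ℕ) (f : Fin (m+1) → LaurentRing m),
          ∏ i, f i ^ u i = f j ^ u j * ∏ i ∈ Finset.univ.erase j, f i ^ u i :=
        fun u f => (Finset.mul_prod_erase Finset.univ (fun i => f i ^ u i)
          (Finset.mem_univ j)).symm
      have er : ∏ i, g i ^ r' i
          = g j * (g j ^ r j * ∏ i ∈ Finset.univ.erase j, g i ^ r i) := by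
        rw [P r' g, show r' j = r j + 1 from by rw [hr']; simp, pow_succ]
        rw [show (∏ i ∈ Finset.univ.erase j, g i ^ r' i)
            = ∏ i ∈ Finset.univ.erase j, g i ^ r i from
          Finset.prod_congr rfl fun i hi => by
            rw [hr', Function.update_of_ne (Finset.ne_of_mem_erase hi)]]
        ring
      have es : ∏ i, h i ^ s i
          = h j * (h j ^ b * ∏ i ∈ Finset.univ.erase j, h i ^ s i) := by
        rw [P s h, hb, pow_succ]; ring
      have es' : ∏ i, h i ^ s' i = h j ^ b * ∏ i ∈ Finset.univ.erase j, h i ^ s i := by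
        rw [P s' h, show s' j = b from by rw [hs']; simp]
        congr 1
        exact Finset.prod_congr rfl fun i hi => by
          rw [hs', Function.update_of_ne (Finset.ne_of_mem_erase hi)]
      have key : h j + g j + g j * h j = 0 := tpow_key m j
      have identity :
          (∏ i, g i ^ r i) * (∏ i, h i ^ s i)
            = -((∏ i, g i ^ r' i) * (∏ i, h i ^ s' i))
              - (∏ i, g i ^ r' i) * (∏ i, h i ^ s i) := by
        rw [er, es, es', P r g]
        exact trade (g j) (h j) (g j ^ r j * ∏ i ∈ Finset.univ.erase j, g i ^ r i)
          (h j ^ b * ∏ i ∈ Finset.univ.erase j, h i ^ s i) key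
      rw [identity]
      have mem1 : (∏ i, g i ^ r' i) * (∏ i, h i ^ s' i) ∈ Spk m k ⊔ Sk m k' := by
        apply ihn r' s'
        · omega
        · simp only [sumsplit] at hk1 ⊢; omega
        · simp only [sumsplit] at hk2 ⊢; omega
      have mem2 : (∏ i, g i ^ r' i) * (∏ i, h i ^ s i) ∈ Spk m k ⊔ Sk m k' := by
        apply ihc (∑ i, s i) r' s le_rfl
        · simp only [sumsplit] at hk1 ⊢; omega
        · simp only [sumsplit] at hk2 ⊢; omega
      exact sub_mem (neg_mem mem1) mem2

/-- For positive integers `k < k'`, `S^k = (S⁺)^k + S^{k'}`. -/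
theorem Sk_eq_Spk_sup_Sk (m k k' : ℕ) (hk : 0 < k) (hkk' : k < k') :
    Sk m k = Spk m k ⊔ Sk m k' := by
  apply le_antisymm
  · rw [Sk]
    apply Submodule.span_le.mpr
    rintro x ⟨r, s, hle, rfl⟩
    exact gen_mem m k k' k' (∑ i, s i) r s le_rfl hle (by omega)
  · apply sup_le
    · rw [Spk, Sk]
      apply Submodule.span_le.mpr
      rintro x ⟨r, hle, rfl⟩
      exact Submodule.subset_span ⟨r, 0, by simpa using hle, by simp⟩
    · exact Submodule.span_mono fun x ⟨r, s, hle, hx⟩ => ⟨r, s, by omega, hx⟩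
end

section
/- Let (A, k) be a Lie–Rinehart pair (non-super case), g = A ⊕ k its associated quasi-Poisson algebra with product (a⊕δ)·(b⊕σ) = ab ⊕ (aσ + bδ), bracket {a⊕δ, b⊕σ} = (δ(b) − σ(a)) ⊕ [δ,σ], and projection π: g → A, a⊕δ ↦ a. Then L(g) := ℂ[t₀^{±1}] ⊗ g with bracket [t₀^r ⊗ x, t₀^s ⊗ y] := t₀^{r+s} ⊗ ({x,y} − r·x·π(y) + s·π(x)·y) is a Lie algebra. -/
section

variable {A : Type*} [CommRing A] [Algebra ℂ A]
variable {L : Type*} [LieRing L] [LieAlgebra ℂ L] [Module A L]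

/-- The commutative product `(a⊕δ)·(b⊕σ) = ab ⊕ (aσ + bδ)` on `g = A ⊕ k`. -/
def gMul (x y : A × L) : A × L := (x.1 * y.1, x.1 • y.2 + y.1 • x.2)

/-- The bracket `{a⊕δ, b⊕σ} = (δ(b) − σ(a)) ⊕ [δ,σ]` on `g = A ⊕ k`. -/
def gBracket (act : L →ₗ⁅ℂ⁆ Derivation ℂ A A) (x y : A × L) : A × L :=
  (act x.2 y.1 - act y.2 x.1, ⁅x.2, y.2⁆)

/-- The degree-component of the bracket on `L(g) = ℂ[t₀^{±1}] ⊗ g`: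
`[t₀^r ⊗ x, t₀^s ⊗ y] = t₀^{r+s} ⊗ ({x,y} − r·x·π(y) + s·π(x)·y)`, where
`π : g → A` is the first projection. -/
def lBracket (act : L →ₗ⁅ℂ⁆ Derivation ℂ A A) (r : ℤ) (x : A × L) (s : ℤ) (y : A × L) :
    A × L :=
  gBracket act x y - r • gMul x (y.1, 0) + s • gMul (x.1, 0) y

end


section
variable {A : Type*} [CommRing A] [Algebra ℂ A]
variable {L : Type*} [LieRing L] [LieAlgebra ℂ L] [Module A L]

lemma lBracket_eq (act : L →ₗ⁅ℂ⁆ Derivation ℂ A A) (r : ℤ) (x : A × L) (s : ℤ) (y : A × L) :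
    lBracket act r x s y =
      (act x.2 y.1 - act y.2 x.1 - r • (x.1 * y.1) + s • (x.1 * y.1),
       ⁅x.2, y.2⁆ - r • y.1 • x.2 + s • x.1 • y.2) := by
  simp [lBracket, gBracket, gMul, Prod.ext_iff]
end

/-- For a Lie–Rinehart pair `(A, k)` with quasi-Poisson algebra `g = A ⊕ k`, the bracket
`[t₀^r ⊗ x, t₀^s ⊗ y] = t₀^{r+s} ⊗ ({x,y} − r·x·π(y) + s·π(x)·y)` makes
`L(g) = ℂ[t₀^{±1}] ⊗ g` a Lie algebra: expressed on pure tensors (which span `L(g)`,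
with the degree of a bracket being the sum of the degrees), the bracket is alternating,
skew-symmetric and satisfies the Jacobi identity. -/
theorem lBracket_isLieAlgebra (A : Type*) [CommRing A] [Algebra ℂ A]
    (L : Type*) [LieRing L] [LieAlgebra ℂ L] [Module A L]
    (act : L →ₗ⁅ℂ⁆ Derivation ℂ A A)
    (hact : ∀ (a : A) (δ : L), act (a • δ) = a • act δ)
    (compat : ∀ (a b : A) (δ γ : L),
      ⁅a • δ, b • γ⁆ =
        (a * act δ b) • γ - (b * act γ a) • δ + (a * b) • ⁅δ, γ⁆) :
    (∀ (r : ℤ) (x : A × L), lBracket act r x r x = 0) ∧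
    (∀ (r s : ℤ) (x y : A × L), lBracket act r x s y = - lBracket act s y r x) ∧
    (∀ (r s p : ℤ) (x y z : A × L),
      lBracket act r x (s + p) (lBracket act s y p z) =
        lBracket act (r + s) (lBracket act r x s y) p z
          + lBracket act s y (r + p) (lBracket act r x p z)) := by
  have hbr : ∀ (c : A) (u v : L), ⁅u, c • v⁆ = act u c • v + c • ⁅u, v⁆ := by
    intro c u v; have := compat 1 c u v; simpa using this
  have hbl : ∀ (c : A) (u v : L), ⁅c • u, v⁆ = -(act v c • u) + c • ⁅u, v⁆ := by
    intro c u v; have := compat c 1 u v; simpa using this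
  have hsk : ∀ u v : L, ⁅v, u⁆ = -⁅u, v⁆ := fun u v => by rw [← lie_skew u v, neg_neg]
  have hz : ∀ (n : ℤ) (v : L), n • v = ((n : ℤ) : A) • v := fun n v =>
    (Int.cast_smul_eq_zsmul A n v).symm
  refine ⟨?_, ?_, ?_⟩
  · intro r x
    simp [lBracket_eq, Prod.ext_iff]
  · intro r s x y
    simp only [lBracket_eq, Prod.neg_mk, Prod.mk.injEq]
    refine ⟨by ring_nf, ?_⟩
    rw [← lie_skew]; abel
  · intro r s p x y z
    obtain ⟨a, δ⟩ := x; obtain ⟨b, γ⟩ := y; obtain ⟨c, ε⟩ := z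
    simp only [lBracket_eq, Prod.mk_add_mk, Prod.mk.injEq]
    constructor
    · simp only [hz, map_sub, map_add, hact, LieHom.map_lie,
        Derivation.commutator_apply, Derivation.sub_apply, Derivation.add_apply,
        Derivation.smul_apply, smul_eq_mul, map_sub, map_add, map_zsmul,
        Derivation.leibniz, Derivation.map_intCast, zsmul_eq_mul]
      push_cast
      ring_nf
    · simp only [hz, zsmul_eq_mul, lie_sub, sub_lie, lie_add, add_lie, lie_neg, neg_lie,
        hbr, hbl, hsk δ γ, hsk δ ε, hsk γ ε,
        smul_add, smul_sub, smul_neg, smul_smul, Derivation.leibniz, smul_eq_mul,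
        map_sub, map_add, Derivation.sub_apply, Derivation.add_apply, Derivation.smul_apply,
        Derivation.map_intCast]
      rw [leibniz_lie δ γ ε]
      push_cast
      module
end

section
/- Let A = ℂ[t₀^{±1},...,t_m^{±1}], let S be the ideal generated by {t_i − 1 : 0 ≤ i ≤ m}, let Δ = {t_i d/dt_i : 0 ≤ i ≤ m}, and let SΔ ⊆ Der(A) be the ℂ-span of products f·δ with f ∈ S, δ ∈ Δ. Then SΔ is a Lie subalgebra of Der(A), S²Δ is a Lie ideal of SΔ, and the quotient SΔ/S²Δ is isomorphic as a Lie algebra to gl(m+1, ℂ), via (t_i − 1) t_j d/dt_j + S²Δ ↦ E_{i,j}. -/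
/-- The Euler derivation `d_i = t_i d/dt_i`, as a ℂ-linear endomorphism of `A`
(it sends `t^r ↦ r_i t^r`). -/
noncomputable def euler (m : ℕ) (i : Fin (m + 1)) : Module.End ℂ (LaurentRing m) :=
  (AddMonoidAlgebra.coeffLinearEquiv ℂ).symm.toLinearMap ∘ₗ
    (Finsupp.lsum ℂ fun r : Fin (m + 1) →₀ ℤ => ((r i : ℤ) : ℂ) • Finsupp.lsingle r) ∘ₗ
      (AddMonoidAlgebra.coeffLinearEquiv ℂ).toLinearMap

/-- Multiplication by `f` as an endomorphism of `A`. -/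
noncomputable def mulOp (m : ℕ) (f : LaurentRing m) : Module.End ℂ (LaurentRing m) :=
  LinearMap.mulLeft ℂ f

/-- The ideal `S = (t₀ - 1, …, t_m - 1)`. -/
noncomputable def Sideal (m : ℕ) : Ideal (LaurentRing m) :=
  Ideal.span { x | ∃ i : Fin (m + 1), x = tpow m (Finsupp.single i 1) - 1 }

/-- `S^kΔ`: the ℂ-span of the operators `f·d_i` with `f ∈ S^k`, inside `End(A)`. -/
noncomputable def SkDelta (m k : ℕ) : Submodule ℂ (Module.End ℂ (LaurentRing m)) :=
  Submodule.span ℂ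
    { x | ∃ f ∈ (Sideal m) ^ k, ∃ i : Fin (m + 1), x = mulOp m f ∘ₗ euler m i }

noncomputable def eps (m : ℕ) : LaurentRing m →ₗ[ℂ] ℂ :=
  Finsupp.lsum ℂ (fun _ => LinearMap.id) ∘ₗ (AddMonoidAlgebra.coeffLinearEquiv ℂ).toLinearMap

lemma euler_single (m : ℕ) (i : Fin (m+1)) (r : Fin (m+1) →₀ ℤ) (c : ℂ) :
    euler m i (AddMonoidAlgebra.single r c) = ((r i : ℤ) : ℂ) • AddMonoidAlgebra.single r c := by
  simp only [euler, LinearMap.comp_apply, LinearEquiv.coe_coe,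
    AddMonoidAlgebra.coeffLinearEquiv_apply, AddMonoidAlgebra.coeff_single, Finsupp.lsum_single,
    LinearMap.smul_apply, Finsupp.lsingle_apply, AddMonoidAlgebra.coeffLinearEquiv_symm_apply]
  rfl

lemma eps_single (m : ℕ) (r : Fin (m+1) →₀ ℤ) (c : ℂ) :
    eps m (AddMonoidAlgebra.single r c) = c := by
  simp only [eps, LinearMap.comp_apply, LinearEquiv.coe_coe,
    AddMonoidAlgebra.coeffLinearEquiv_apply, AddMonoidAlgebra.coeff_single, Finsupp.lsum_single,
    LinearMap.id_apply]

lemma tpow_mul (m : ℕ) (r s : Fin (m+1) →₀ ℤ) : tpow m r * tpow m s = tpow m (r+s) := by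
  simp [tpow, AddMonoidAlgebra.single_mul_single]

lemma tpow_zero (m : ℕ) : tpow m 0 = 1 := rfl

lemma laurent_induction {m : ℕ} {p : LaurentRing m → Prop} (f : LaurentRing m)
    (h0 : p 0) (hadd : ∀ f g, p f → p g → p (f + g))
    (hs : ∀ r c, p (AddMonoidAlgebra.single r c)) : p f :=
  AddMonoidAlgebra.induction_linear f h0 hadd hs

lemma euler_mul (m : ℕ) (i : Fin (m+1)) (f g : LaurentRing m) :
    euler m i (f * g) = euler m i f * g + f * euler m i g := by
  induction f using laurent_induction with
  | h0 => simp
  | hadd a b ha hb => rw [add_mul, map_add, ha, hb, map_add, add_mul]; ring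
  | hs r c =>
    induction g using laurent_induction with
    | h0 => simp
    | hadd a b ha hb => rw [mul_add, map_add, ha, hb, map_add, mul_add]; ring
    | hs s d =>
      rw [AddMonoidAlgebra.single_mul_single, euler_single, euler_single, euler_single,
        smul_mul_assoc, mul_smul_comm, AddMonoidAlgebra.single_mul_single, ← add_smul]
      congr 1
      push_cast [Finsupp.add_apply]
      ring

lemma eps_mul (m : ℕ) (f g : LaurentRing m) : eps m (f * g) = eps m f * eps m g := by
  induction f using laurent_induction with
  | h0 => simp
  | hadd a b ha hb => rw [add_mul, map_add, ha, hb, map_add]; ring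
  | hs r c =>
    induction g using laurent_induction with
    | h0 => simp
    | hadd a b ha hb => rw [mul_add, map_add, ha, hb, map_add]; ring
    | hs s d => rw [AddMonoidAlgebra.single_mul_single, eps_single, eps_single, eps_single]

noncomputable def lam (m : ℕ) (i : Fin (m+1)) : LaurentRing m →ₗ[ℂ] ℂ :=
  eps m ∘ₗ euler m i

lemma lam_single (m : ℕ) (i : Fin (m+1)) (r : Fin (m+1) →₀ ℤ) (c : ℂ) :
    lam m i (AddMonoidAlgebra.single r c) = ((r i : ℤ) : ℂ) * c := by
  rw [lam, LinearMap.comp_apply, euler_single, map_smul, eps_single, smul_eq_mul]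

lemma lam_mul (m : ℕ) (i : Fin (m+1)) (f g : LaurentRing m) :
    lam m i (f * g) = lam m i f * eps m g + eps m f * lam m i g := by
  rw [lam]
  simp only [LinearMap.comp_apply, euler_mul, map_add, eps_mul]

lemma eps_tpow (m : ℕ) (r : Fin (m+1) →₀ ℤ) : eps m (tpow m r) = 1 := eps_single m r 1
lemma lam_tpow (m : ℕ) (i : Fin (m+1)) (r : Fin (m+1) →₀ ℤ) :
    lam m i (tpow m r) = ((r i : ℤ) : ℂ) := by rw [tpow, lam_single, mul_one]
lemma eps_one (m : ℕ) : eps m 1 = 1 := eps_tpow m 0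
lemma lam_one (m : ℕ) (i : Fin (m+1)) : lam m i 1 = 0 := by
  have := lam_tpow m i 0; rw [tpow_zero] at this; simpa using this

lemma euler_comm (m : ℕ) (i j : Fin (m+1)) (x : LaurentRing m) :
    euler m i (euler m j x) = euler m j (euler m i x) := by
  induction x using laurent_induction with
  | h0 => simp
  | hadd a b ha hb => simp [map_add, ha, hb]
  | hs r c =>
    simp only [euler_single, map_smul, smul_smul]
    rw [mul_comm]

lemma tpow_sub_one_mem (m : ℕ) (r : Fin (m+1) →₀ ℤ) : tpow m r - 1 ∈ Sideal m := by
  have key : ∀ x y : Fin (m+1) →₀ ℤ, tpow m y - 1 ∈ Sideal m → tpow m x - 1 ∈ Sideal m →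
      tpow m (x + y) - 1 ∈ Sideal m := by
    intro x y hy hx
    have : tpow m (x + y) - 1 = tpow m x * (tpow m y - 1) + (tpow m x - 1) := by
      rw [← tpow_mul]; ring
    rw [this]
    exact add_mem (Ideal.mul_mem_left _ _ hy) hx
  have hgen : ∀ a : Fin (m+1), tpow m (Finsupp.single a 1) - 1 ∈ Sideal m := fun a =>
    Ideal.subset_span ⟨a, rfl⟩
  have hneg : ∀ a : Fin (m+1), tpow m (Finsupp.single a (-1)) - 1 ∈ Sideal m := by
    intro a
    have h1 : tpow m (Finsupp.single a (-1)) * tpow m (Finsupp.single a 1) = 1 := by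
      rw [tpow_mul, ← Finsupp.single_add, neg_add_cancel, Finsupp.single_zero, tpow_zero]
    have : tpow m (Finsupp.single a (-1)) - 1 =
        (- tpow m (Finsupp.single a (-1))) * (tpow m (Finsupp.single a 1) - 1) := by
      linear_combination h1
    rw [this]
    exact Ideal.mul_mem_left _ _ (hgen a)
  have hsingle : ∀ (a : Fin (m+1)) (b : ℤ), tpow m (Finsupp.single a b) - 1 ∈ Sideal m := by
    intro a b
    induction b using Int.induction_on with
    | zero => simp [Finsupp.single_zero, tpow_zero]
    | succ n ihn =>
      have : Finsupp.single a ((n : ℤ) + 1) = Finsupp.single a (n : ℤ) + Finsupp.single a 1 := by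
        rw [← Finsupp.single_add]
      rw [this]; exact key _ _ (hgen a) ihn
    | pred n ihn =>
      have : Finsupp.single a (-(n : ℤ) - 1) = Finsupp.single a (-(n:ℤ)) + Finsupp.single a (-1) := by
        rw [← Finsupp.single_add]; ring_nf
      rw [this]; exact key _ _ (hneg a) ihn
  induction r using Finsupp.induction with
  | zero => simp [tpow_zero]
  | single_add a b f _ _ ih => exact key _ _ ih (hsingle a b)

lemma eps_zero_of_mem {m : ℕ} {f : LaurentRing m} (hf : f ∈ Sideal m) : eps m f = 0 := by
  refine Submodule.span_induction ?_ ?_ ?_ ?_ hf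
  · rintro x ⟨i, rfl⟩
    rw [map_sub, eps_tpow, eps_one, sub_self]
  · simp
  · intro a b _ _ ha hb; rw [map_add, ha, hb, add_zero]
  · intro a x _ hx
    show eps m (a * x) = 0
    rw [eps_mul, hx, mul_zero]

lemma sub_eps_mem (m : ℕ) (a : LaurentRing m) : a - eps m a • (1 : LaurentRing m) ∈ Sideal m := by
  induction a using laurent_induction with
  | h0 => simp
  | hadd f g hf hg =>
    have : f + g - eps m (f + g) • (1:LaurentRing m)
        = (f - eps m f • 1) + (g - eps m g • 1) := by
      rw [map_add, add_smul]; abel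
    rw [this]; exact add_mem hf hg
  | hs r c =>
    have h1 : AddMonoidAlgebra.single r c = c • tpow m r := by
      rw [tpow]
      rw [AddMonoidAlgebra.smul_single', mul_one]
    rw [h1, map_smul, eps_tpow, smul_eq_mul, mul_one, ← smul_sub, Algebra.smul_def]
    exact Ideal.mul_mem_left _ _ (tpow_sub_one_mem m r)

section
attribute [local instance] LieRing.ofAssociativeRing

-- mulOp lemmas
lemma mulOp_apply (m : ℕ) (f x : LaurentRing m) : mulOp m f x = f * x := rfl
lemma mulOp_add (m : ℕ) (f g : LaurentRing m) : mulOp m (f + g) = mulOp m f + mulOp m g := by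
  ext x; simp [mulOp_apply, add_mul]
lemma mulOp_sub (m : ℕ) (f g : LaurentRing m) : mulOp m (f - g) = mulOp m f - mulOp m g := by
  ext x; simp [mulOp_apply, sub_mul]
lemma mulOp_smul (m : ℕ) (c : ℂ) (f : LaurentRing m) : mulOp m (c • f) = c • mulOp m f := by
  ext x; simp [mulOp_apply, smul_mul_assoc]

lemma lie_gen (m : ℕ) (f g : LaurentRing m) (i j : Fin (m+1)) :
    ⁅mulOp m f ∘ₗ euler m i, mulOp m g ∘ₗ euler m j⁆ =
      mulOp m (f * euler m i g) ∘ₗ euler m j - mulOp m (g * euler m j f) ∘ₗ euler m i := by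
  rw [Ring.lie_def]
  refine LinearMap.ext fun x => ?_
  simp only [LinearMap.sub_apply, Module.End.mul_apply, LinearMap.comp_apply, mulOp_apply,
    euler_mul]
  rw [euler_comm m j i x]
  ring

-- Ideal lemmas
lemma euler_mem_of_sq {m : ℕ} {f : LaurentRing m} (i : Fin (m+1))
    (hf : f ∈ (Sideal m) ^ 2) : euler m i f ∈ Sideal m := by
  rw [sq] at hf
  refine Submodule.mul_induction_on hf ?_ ?_
  · intro a ha b hb
    rw [euler_mul]
    exact add_mem (Ideal.mul_mem_left _ _ hb) (Ideal.mul_mem_right _ _ ha)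
  · intro a b ha hb
    rw [map_add]; exact add_mem ha hb

lemma lam_zero_of_sq {m : ℕ} {f : LaurentRing m} (p : Fin (m+1))
    (hf : f ∈ (Sideal m) ^ 2) : lam m p f = 0 := by
  rw [sq] at hf
  refine Submodule.mul_induction_on hf ?_ ?_
  · intro a ha b hb
    rw [lam_mul, eps_zero_of_mem ha, eps_zero_of_mem hb, mul_zero, zero_mul, add_zero]
  · intro a b ha hb
    rw [map_add, ha, hb, add_zero]

lemma eps_zero_of_sq {m : ℕ} {f : LaurentRing m} (hf : f ∈ (Sideal m) ^ 2) : eps m f = 0 := by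
  rw [sq] at hf
  exact eps_zero_of_mem (Ideal.mul_le_left hf)

lemma lam_gen (m : ℕ) (p j : Fin (m+1)) :
    lam m p (tpow m (Finsupp.single j 1) - 1) = if j = p then 1 else 0 := by
  rw [map_sub, lam_tpow, lam_one, sub_zero, Finsupp.single_apply]
  split_ifs <;> simp

lemma sum_lam_gen (m : ℕ) (j : Fin (m+1)) :
    ∑ p, lam m p (tpow m (Finsupp.single j 1) - 1) • (tpow m (Finsupp.single p 1) - 1)
      = tpow m (Finsupp.single j 1) - 1 := by
  simp only [lam_gen, ite_smul, one_smul, zero_smul]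
  rw [Finset.sum_ite_eq]
  simp

lemma key_decomp {m : ℕ} {f : LaurentRing m} (hf : f ∈ Sideal m) :
    f - ∑ p, lam m p f • (tpow m (Finsupp.single p 1) - 1) ∈ (Sideal m) ^ 2 := by
  refine Submodule.span_induction ?_ ?_ ?_ ?_ hf
  · rintro x ⟨j, rfl⟩
    rw [sum_lam_gen, sub_self]
    exact Submodule.zero_mem _
  · simp
  · intro a b _ _ ha hb
    have : a + b - ∑ p, lam m p (a + b) • (tpow m (Finsupp.single p 1) - 1)
        = (a - ∑ p, lam m p a • (tpow m (Finsupp.single p 1) - 1))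
          + (b - ∑ p, lam m p b • (tpow m (Finsupp.single p 1) - 1)) := by
      simp only [map_add, add_smul, Finset.sum_add_distrib]; abel
    rw [this]; exact add_mem ha hb
  · intro a x hx hrec
    have hxS : x ∈ Sideal m := hx
    show a * x - ∑ p, lam m p (a * x) • (tpow m (Finsupp.single p 1) - 1) ∈ (Sideal m)^2
    have hlam : ∀ p, lam m p (a * x) = eps m a * lam m p x := by
      intro p; rw [lam_mul, eps_zero_of_mem hxS, mul_zero, zero_add]
    simp only [hlam]
    have hsum : ∑ p, (eps m a * lam m p x) • (tpow m (Finsupp.single p 1) - 1)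
        = eps m a • ∑ p, lam m p x • (tpow m (Finsupp.single p 1) - 1) := by
      rw [Finset.smul_sum]; simp [smul_smul]
    rw [hsum]
    have hid : a * x - eps m a • ∑ p, lam m p x • (tpow m (Finsupp.single p 1) - 1)
        = (a - eps m a • 1) * x
          + eps m a • (x - ∑ p, lam m p x • (tpow m (Finsupp.single p 1) - 1)) := by
      rw [sub_mul, smul_mul_assoc, one_mul, smul_sub]; abel
    rw [hid, sq]
    refine add_mem (Submodule.mul_mem_mul (sub_eps_mem m a) hxS) ?_
    rw [Algebra.smul_def]
    rw [sq] at hrec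
    exact Ideal.mul_mem_left _ _ hrec

noncomputable def Emap (m : ℕ) :
    Module.End ℂ (LaurentRing m) →ₗ[ℂ] Matrix (Fin (m+1)) (Fin (m+1)) ℂ where
  toFun T := Matrix.of fun p q => lam m p (T (tpow m (Finsupp.single q 1)))
  map_add' T U := by ext p q; simp [Matrix.add_apply]
  map_smul' c T := by ext p q; simp [Matrix.smul_apply]

lemma Emap_apply (m : ℕ) (T : Module.End ℂ (LaurentRing m)) (p q : Fin (m+1)) :
    Emap m T p q = lam m p (T (tpow m (Finsupp.single q 1))) := rfl

lemma euler_tpow (m : ℕ) (j q : Fin (m+1)) :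
    euler m j (tpow m (Finsupp.single q 1)) =
      (if q = j then (1:ℂ) else 0) • tpow m (Finsupp.single q 1) := by
  rw [tpow, euler_single, Finsupp.single_apply]
  split_ifs <;> simp

lemma Emap_gen (m : ℕ) (f : LaurentRing m) (j : Fin (m+1)) (p q : Fin (m+1)) :
    Emap m (mulOp m f ∘ₗ euler m j) p q =
      (if q = j then (1:ℂ) else 0) * (lam m p f + (if q = p then eps m f else 0)) := by
  rw [Emap_apply, LinearMap.comp_apply, euler_tpow, map_smul, mulOp_apply, map_smul,
    smul_eq_mul]
  congr 1
  rw [lam_mul, lam_tpow, eps_tpow, mul_one, Finsupp.single_apply]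
  split_ifs with h <;> simp [h]

lemma Emap_gen_mem {m : ℕ} {f : LaurentRing m} (hf : f ∈ Sideal m) (j : Fin (m+1))
    (p q : Fin (m+1)) :
    Emap m (mulOp m f ∘ₗ euler m j) p q = if q = j then lam m p f else 0 := by
  rw [Emap_gen, eps_zero_of_mem hf]
  split_ifs <;> simp

lemma Emap_sq {m : ℕ} {T : Module.End ℂ (LaurentRing m)} (hT : T ∈ SkDelta m 2) :
    Emap m T = 0 := by
  refine Submodule.span_induction ?_ ?_ ?_ ?_ hT
  · rintro x ⟨f, hf, j, rfl⟩
    ext p q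
    rw [Emap_gen, lam_zero_of_sq p hf, eps_zero_of_sq hf]
    split_ifs <;> simp
  · simp
  · intro a b _ _ ha hb; rw [map_add, ha, hb, add_zero]
  · intro c x _ hx; rw [map_smul, hx, smul_zero]

lemma mem_SkDelta {m k : ℕ} {f : LaurentRing m} (hf : f ∈ (Sideal m) ^ k) (i : Fin (m+1)) :
    mulOp m f ∘ₗ euler m i ∈ SkDelta m k :=
  Submodule.subset_span ⟨f, hf, i, rfl⟩

lemma lie_gen_mem_1 {m : ℕ} {f g : LaurentRing m} (hf : f ∈ (Sideal m)^1)
    (hg : g ∈ (Sideal m)^1) (i j : Fin (m+1)) :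
    ⁅mulOp m f ∘ₗ euler m i, mulOp m g ∘ₗ euler m j⁆ ∈ SkDelta m 1 := by
  rw [pow_one] at hf hg
  rw [lie_gen]
  refine sub_mem (mem_SkDelta ?_ j) (mem_SkDelta ?_ i) <;> rw [pow_one]
  · exact Ideal.mul_mem_right _ _ hf
  · exact Ideal.mul_mem_right _ _ hg

lemma lie_gen_mem_2 {m : ℕ} {f g : LaurentRing m} (hf : f ∈ (Sideal m)^1)
    (hg : g ∈ (Sideal m)^2) (i j : Fin (m+1)) :
    ⁅mulOp m f ∘ₗ euler m i, mulOp m g ∘ₗ euler m j⁆ ∈ SkDelta m 2 := by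
  rw [pow_one] at hf
  rw [lie_gen]
  refine sub_mem (mem_SkDelta ?_ j) (mem_SkDelta ?_ i)
  · rw [sq]; exact Submodule.mul_mem_mul hf (euler_mem_of_sq i hg)
  · exact Ideal.mul_mem_right _ _ hg

lemma part1 (m : ℕ) : ∀ x ∈ SkDelta m 1, ∀ y ∈ SkDelta m 1, ⁅x, y⁆ ∈ SkDelta m 1 := by
  intro x hx
  refine Submodule.span_induction ?_ ?_ ?_ ?_ hx
  · rintro x ⟨f, hf, i, rfl⟩ y hy
    refine Submodule.span_induction ?_ ?_ ?_ ?_ hy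
    · rintro y ⟨g, hg, j, rfl⟩
      exact lie_gen_mem_1 hf hg i j
    · simp
    · intro a b _ _ ha hb; rw [lie_add]; exact add_mem ha hb
    · intro c a _ ha; rw [lie_smul]; exact Submodule.smul_mem _ _ ha
  · intro y _; rw [zero_lie]; exact Submodule.zero_mem _
  · intro a b _ _ ha hb y hy; rw [add_lie]; exact add_mem (ha y hy) (hb y hy)
  · intro c a _ ha y hy; rw [smul_lie]; exact Submodule.smul_mem _ _ (ha y hy)

lemma part2 (m : ℕ) : ∀ x ∈ SkDelta m 1, ∀ y ∈ SkDelta m 2, ⁅x, y⁆ ∈ SkDelta m 2 := by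
  intro x hx
  refine Submodule.span_induction ?_ ?_ ?_ ?_ hx
  · rintro x ⟨f, hf, i, rfl⟩ y hy
    refine Submodule.span_induction ?_ ?_ ?_ ?_ hy
    · rintro y ⟨g, hg, j, rfl⟩
      exact lie_gen_mem_2 hf hg i j
    · simp
    · intro a b _ _ ha hb; rw [lie_add]; exact add_mem ha hb
    · intro c a _ ha; rw [lie_smul]; exact Submodule.smul_mem _ _ ha
  · intro y _; rw [zero_lie]; exact Submodule.zero_mem _
  · intro a b _ _ ha hb y hy; rw [add_lie]; exact add_mem (ha y hy) (hb y hy)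
  · intro c a _ ha y hy; rw [smul_lie]; exact Submodule.smul_mem _ _ (ha y hy)

lemma eps_euler (m : ℕ) (i : Fin (m+1)) (g : LaurentRing m) :
    eps m (euler m i g) = lam m i g := rfl

lemma Emap_lie (m : ℕ) : ∀ T ∈ SkDelta m 1, ∀ U ∈ SkDelta m 1,
    Emap m ⁅T, U⁆ = Emap m T * Emap m U - Emap m U * Emap m T := by
  intro T hT
  refine Submodule.span_induction ?_ ?_ ?_ ?_ hT
  · rintro T ⟨f, hf, i, rfl⟩ U hU
    refine Submodule.span_induction ?_ ?_ ?_ ?_ hU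
    · rintro U ⟨g, hg, j, rfl⟩
      rw [pow_one] at hf hg
      have hF : f * euler m i g ∈ Sideal m := Ideal.mul_mem_right _ _ hf
      have hG : g * euler m j f ∈ Sideal m := Ideal.mul_mem_right _ _ hg
      ext p q
      rw [lie_gen, map_sub]
      simp only [Matrix.sub_apply, Emap_gen_mem hF, Emap_gen_mem hG, Matrix.mul_apply,
        Emap_gen_mem hf, Emap_gen_mem hg, lam_mul, eps_euler, eps_zero_of_mem hf,
        eps_zero_of_mem hg, zero_mul, add_zero, ite_mul, mul_ite, mul_zero, zero_add,
        Finset.sum_ite_eq', Finset.mem_univ, if_true]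
      split_ifs <;> simp [Finset.sum_ite_eq']
    · simp
    · intro a b _ _ ha hb
      rw [lie_add, map_add, map_add, ha, hb]
      noncomm_ring
    · intro c a _ ha
      rw [lie_smul, map_smul, map_smul, ha]
      rw [smul_sub, smul_mul_assoc, mul_smul_comm]
  · intro U _
    simp
  · intro a b _ _ ha hb U hU
    rw [add_lie, map_add, map_add, ha U hU, hb U hU]
    noncomm_ring
  · intro c a _ ha U hU
    rw [smul_lie, map_smul, map_smul, ha U hU, smul_sub, smul_mul_assoc, mul_smul_comm]

lemma mulOp_sum {m : ℕ} {α : Type*} (s : Finset α) (g : α → LaurentRing m) :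
    mulOp m (∑ p ∈ s, g p) = ∑ p ∈ s, mulOp m (g p) := by
  refine LinearMap.ext fun x => ?_
  simp [mulOp_apply, Finset.sum_mul, LinearMap.sum_apply]

/-- notation for the basic operator -/
noncomputable def Xop (m : ℕ) (p q : Fin (m+1)) : Module.End ℂ (LaurentRing m) :=
  mulOp m (tpow m (Finsupp.single p 1) - 1) ∘ₗ euler m q

lemma Xop_mem (m : ℕ) (p q : Fin (m+1)) : Xop m p q ∈ SkDelta m 1 :=
  mem_SkDelta (by rw [pow_one]; exact Ideal.subset_span ⟨p, rfl⟩) q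

lemma Emap_Xop (m : ℕ) (i j : Fin (m+1)) :
    Emap m (Xop m i j) = Matrix.single i j 1 := by
  ext p q
  rw [Xop, Emap_gen_mem (Ideal.subset_span ⟨i, rfl⟩), lam_gen]
  show _ = if i = p ∧ j = q then (1:ℂ) else 0
  split_ifs with h1 h2 h3 <;> simp_all

lemma decomp_SkDelta (m : ℕ) : ∀ T ∈ SkDelta m 1,
    T - ∑ p, ∑ q, Emap m T p q • Xop m p q ∈ SkDelta m 2 := by
  intro T hT
  refine Submodule.span_induction ?_ ?_ ?_ ?_ hT
  · rintro T ⟨f, hf, j, rfl⟩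
    rw [pow_one] at hf
    have hsum : ∑ p, ∑ q, Emap m (mulOp m f ∘ₗ euler m j) p q • Xop m p q
        = ∑ p, lam m p f • Xop m p j := by
      refine Finset.sum_congr rfl fun p _ => ?_
      simp only [Emap_gen_mem hf, ite_smul, zero_smul]
      rw [Finset.sum_ite_eq', if_pos (Finset.mem_univ j)]
    rw [hsum]
    have hrw : mulOp m f ∘ₗ euler m j - ∑ p, lam m p f • Xop m p j
        = mulOp m (f - ∑ p, lam m p f • (tpow m (Finsupp.single p 1) - 1)) ∘ₗ euler m j := by
      refine LinearMap.ext fun x => ?_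
      simp only [LinearMap.sub_apply, LinearMap.comp_apply, LinearMap.sum_apply,
        LinearMap.smul_apply, mulOp_apply, Xop, sub_mul, Finset.sum_mul, smul_mul_assoc]
    rw [hrw]
    exact mem_SkDelta (key_decomp hf) j
  · simp
  · intro a b _ _ ha hb
    have : a + b - ∑ p, ∑ q, Emap m (a + b) p q • Xop m p q
        = (a - ∑ p, ∑ q, Emap m a p q • Xop m p q)
          + (b - ∑ p, ∑ q, Emap m b p q • Xop m p q) := by
      simp only [map_add, Matrix.add_apply, add_smul, Finset.sum_add_distrib]; abel
    rw [this]; exact add_mem ha hb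
  · intro c a _ ha
    have : c • a - ∑ p, ∑ q, Emap m (c • a) p q • Xop m p q
        = c • (a - ∑ p, ∑ q, Emap m a p q • Xop m p q) := by
      simp only [map_smul, Matrix.smul_apply, smul_eq_mul, mul_smul, smul_sub,
        Finset.smul_sum]
    rw [this]; exact Submodule.smul_mem _ _ ha

end

/-- `SΔ` is a Lie subalgebra of `Der(A) ⊆ End(A)` (under the commutator bracket),
`S²Δ` is a Lie ideal of `SΔ`, and `SΔ/S²Δ ≅ gl(m+1,ℂ)` as Lie algebras via
`(t_i − 1)·d_j + S²Δ ↦ E_{i,j}`.  The isomorphism of the quotient is expressed by a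
surjective ℂ-linear map `e : SΔ → gl(m+1,ℂ)` with kernel exactly `S²Δ`, which
intertwines the commutator brackets and sends `(t_i − 1)·d_j` to `E_{i,j}`. -/
theorem sDelta_quotient_iso_gl (m : ℕ) :
    (∀ x ∈ SkDelta m 1, ∀ y ∈ SkDelta m 1, ⁅x, y⁆ ∈ SkDelta m 1) ∧
    (∀ x ∈ SkDelta m 1, ∀ y ∈ SkDelta m 2, ⁅x, y⁆ ∈ SkDelta m 2) ∧
    ∃ e : (SkDelta m 1 : Submodule ℂ (Module.End ℂ (LaurentRing m))) →ₗ[ℂ]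
        Matrix (Fin (m + 1)) (Fin (m + 1)) ℂ,
      Function.Surjective e ∧
      LinearMap.ker e = Submodule.comap (SkDelta m 1).subtype (SkDelta m 2) ∧
      (∀ x y z : SkDelta m 1,
        (z : Module.End ℂ (LaurentRing m)) =
            ⁅(x : Module.End ℂ (LaurentRing m)), (y : Module.End ℂ (LaurentRing m))⁆ →
        e z = e x * e y - e y * e x) ∧
      (∀ (i j : Fin (m + 1)) (x : SkDelta m 1),
        (x : Module.End ℂ (LaurentRing m)) =
            mulOp m (tpow m (Finsupp.single i 1) - 1) ∘ₗ euler m j →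
        e x = Matrix.single i j 1) := by
  refine ⟨part1 m, part2 m, Emap m ∘ₗ (SkDelta m 1).subtype, ?_, ?_, ?_, ?_⟩
  · intro M
    refine ⟨⟨∑ p, ∑ q, M p q • Xop m p q,
      sum_mem fun p _ => sum_mem fun q _ => Submodule.smul_mem _ _ (Xop_mem m p q)⟩, ?_⟩
    show Emap m (∑ p, ∑ q, M p q • Xop m p q) = M
    simp only [map_sum, map_smul, Emap_Xop, Matrix.smul_single, smul_eq_mul, mul_one]
    exact (Matrix.matrix_eq_sum_single M).symm
  · ext x
    simp only [LinearMap.mem_ker, Submodule.mem_comap, LinearMap.comp_apply,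
      Submodule.coe_subtype]
    constructor
    · intro h
      have hd := decomp_SkDelta m x.1 x.2
      rw [h] at hd
      simpa using hd
    · exact fun h => Emap_sq h
  · intro x y z hz
    show Emap m z.1 = Emap m x.1 * Emap m y.1 - Emap m y.1 * Emap m x.1
    rw [hz]
    exact Emap_lie m x.1 x.2 y.1 y.2
  · intro i j x hx
    show Emap m x.1 = _
    rw [hx]
    exact Emap_Xop m i j
end

section
/- Let (A, k) be a Lie–Rinehart pair with associated quasi-Poisson algebra g = A ⊕ k, and let (M, φ, φ̂, ψ) be a quasi-Poisson module over (A,k). Then in End(M), for all a, b ∈ A: ψ_{ab} = −φ_{ab}ψ₁ + φ_a ψ_b + φ_b ψ_a. -/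
/-- The commutative product `(a⊕δ)·(b⊕σ) = ab ⊕ (aσ + bδ)` on the quasi-Poisson
algebra `g = A ⊕ k` of a Lie–Rinehart pair. -/
def qpMul {A : Type*} [CommRing A] {L : Type*} [AddCommGroup L] [Module A L]
    (x y : A × L) : A × L :=
  (x.1 * y.1, x.1 • y.2 + y.1 • x.2)

/-- The bracket `{a⊕δ, b⊕σ} = (δ(b) − σ(a)) ⊕ [δ,σ]` on `g = A ⊕ k`. -/
def qpBracket {A : Type*} [CommRing A] [Algebra ℂ A]
    {L : Type*} [LieRing L] [LieAlgebra ℂ L]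
    (act : L →ₗ⁅ℂ⁆ Derivation ℂ A A) (x y : A × L) : A × L :=
  (act x.2 y.1 - act y.2 x.1, ⁅x.2, y.2⁆)

/-- In a quasi-Poisson module `(M, φ, φ̂, ψ)` over a Lie–Rinehart pair `(A, k)`,
one has `ψ_{ab} = −φ_{ab}ψ₁ + φ_a ψ_b + φ_b ψ_a` for all `a, b ∈ A`. -/
theorem qp_psi_mul (A : Type*) [CommRing A] [Algebra ℂ A]
    (L : Type*) [LieRing L] [LieAlgebra ℂ L] [Module A L]
    (act : L →ₗ⁅ℂ⁆ Derivation ℂ A A)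
    (M : Type*) [AddCommGroup M] [Module ℂ M]
    (φ : A →ₐ[ℂ] Module.End ℂ M)
    (ψ : (A × L) →ₗ[ℂ] Module.End ℂ M)
    (φh : (A × L) →ₗ[ℂ] Module.End ℂ M)
    (hψ : ∀ x y : A × L, ψ (qpBracket act x y) = ⁅ψ x, ψ y⁆)
    (h3 : ∀ x y : A × L, ⁅φh x, φh y⁆ = φh (qpMul x (y.1, 0)) - φh (qpMul (x.1, 0) y))
    (h4 : ∀ (a : A) (x : A × L), φh (qpMul (a, 0) x) = φ a * φh x)
    (h5 : ∀ (x : A × L) (a : A), ⁅φh x, φ a⁆ = 0)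
    (h6 : ∀ x y : A × L,
      ⁅φh x, ψ y⁆ = φh (qpBracket act x y) - φ y.1 * ψ x + ψ (qpMul x (y.1, 0)))
    (h7 : ∀ (x : A × L) (a : A), ⁅ψ x, φ a⁆ = φ (act x.2 a)) :
    ∀ a b : A,
      ψ (a * b, 0) = -(φ (a * b) * ψ (1, 0)) + φ a * ψ (b, 0) + φ b * ψ (a, 0) := by
  intro a b
  have e0 : φh ((0 : A), (0 : L)) = 0 := by
    have h : ((0 : A), (0 : L)) = (0 : A × L) := rfl
    rw [h, map_zero]
  -- φ c commutes with ψ (d, 0)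
  have hcomm : ∀ (c d : A), φ c * ψ (d, 0) = ψ (d, 0) * φ c := by
    intro c d
    have h := h7 (d, (0 : L)) c
    simp only [Ring.lie_def, map_zero, Derivation.zero_apply, map_zero] at h
    exact (sub_eq_zero.mp h).symm
  -- bracket of φh (1,0) with ψ (d,0)
  have hA : ∀ d : A, ⁅φh ((1 : A), (0 : L)), ψ (d, 0)⁆ = ψ (d, 0) - φ d * ψ (1, 0) := by
    intro d
    have h := h6 ((1 : A), (0 : L)) (d, (0 : L))
    simp only [qpBracket, qpMul, map_zero, map_zero, Derivation.zero_apply, sub_zero, sub_self,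
      lie_zero, smul_zero, add_zero, one_mul, mul_one, e0, zero_sub, neg_zero] at h
    rw [h]; abel
  -- φh (a, 0) = φ a * φh (1, 0)
  have hφh : φh ((a : A), (0 : L)) = φ a * φh ((1 : A), (0 : L)) := by
    have h := h4 a ((1 : A), (0 : L))
    simp only [qpMul, mul_one, smul_zero, add_zero] at h
    exact h
  -- main application of h6
  have hmain := h6 ((a : A), (0 : L)) ((b : A), (0 : L))
  simp only [qpBracket, qpMul, map_zero, map_zero, Derivation.zero_apply, sub_zero, sub_self,
    lie_zero, smul_zero, add_zero, e0, zero_sub, neg_zero] at hmain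
  -- so ψ (a*b, 0) = ⁅φh (a,0), ψ (b,0)⁆ + φ b * ψ (a,0)
  have key : ψ ((a * b : A), (0 : L)) = ⁅φh ((a : A), (0 : L)), ψ (b, 0)⁆ + φ b * ψ (a, 0) := by
    rw [hmain]; abel
  -- compute the bracket
  have hc : φh ((1 : A), (0 : L)) * φ b = φ b * φh ((1 : A), (0 : L)) := by
    have h := h5 ((1 : A), (0 : L)) b
    simp only [Ring.lie_def] at h
    exact sub_eq_zero.mp h
  have hbr : ⁅φh ((a : A), (0 : L)), ψ (b, 0)⁆
      = φ a * (ψ (b, 0) - φ b * ψ (1, 0)) := by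
    rw [hφh, Ring.lie_def]
    have hAe := hA b
    rw [Ring.lie_def] at hAe
    calc φ a * φh (1, 0) * ψ (b, 0) - ψ (b, 0) * (φ a * φh (1, 0))
        = φ a * (φh (1, 0) * ψ (b, 0)) - (ψ (b, 0) * φ a) * φh (1, 0) := by
          rw [mul_assoc, mul_assoc]
      _ = φ a * (φh (1, 0) * ψ (b, 0)) - (φ a * ψ (b, 0)) * φh (1, 0) := by
          rw [hcomm a b]
      _ = φ a * (φh (1, 0) * ψ (b, 0) - ψ (b, 0) * φh (1, 0)) := by
          rw [mul_assoc, mul_sub]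
      _ = φ a * (ψ (b, 0) - φ b * ψ (1, 0)) := by rw [hAe]
  rw [key, hbr, map_mul]
  noncomm_ring
end
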